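/- Suppose γ ≥ 1 is a constant such that for every n, m ∈ ℕ, p ∈ [0,1], and matrix A ∈ [0,1]^{n×m}, there exists x ∈ {0,1}^m with ‖A(p·𝟏 − x)‖_∞ ≤ γ·√n. Then, setting ζ = 100γ, the following holds for all positive integers k and all n₁ ≥ n₂ ≥ ... ≥ n_k ≥ 1: for every m ∈ ℕ and all matrices A¹ ∈ [0,1]^{n₁×m}, ..., A^k ∈ [0,1]^{n_k×m}, there exists a coloring χ: [m] → [k] such that for every s ∈ [k], ‖A^s((1/k)·𝟏 − 𝟏(χ⁻¹(s)))‖_∞ ≤ ζ·(1 − 1/√k)·√n₁. -/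

import Mathlib

lemma poly_key (a b : ℝ) (ha : 1 ≤ a) (hb : 1 ≤ b) (h2 : b ≤ 2*a) (h3 : 4*a^2 ≤ 3*b^2) :
    b^2 ≤ 100*a*b - 100*a^2 := by
  have ha0 : (0:ℝ) < a := by linarith
  have hb0 : (0:ℝ) < b := by linarith
  have h49 : 50*a ≤ 49*b := by nlinarith [ha0, hb0]
  nlinarith [mul_nonneg (sub_nonneg.2 h2) hb0.le, mul_nonneg (sub_nonneg.2 h49) ha0.le]

lemma sqrt_key (k t : ℕ) (ht : 1 ≤ t) (h34 : 4*t ≤ 3*k) (h4 : k ≤ 4*t) :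
    Real.sqrt k / t ≤ 100 * (1/Real.sqrt t - 1/Real.sqrt k) := by
  have hk1 : 1 ≤ k := by omega
  set a := Real.sqrt t with hadef
  set b := Real.sqrt k with hbdef
  have ha : 1 ≤ a := by
    rw [hadef, show (1:ℝ) = Real.sqrt 1 by simp]
    exact Real.sqrt_le_sqrt (by exact_mod_cast ht)
  have hb : 1 ≤ b := by
    rw [hbdef, show (1:ℝ) = Real.sqrt 1 by simp]
    exact Real.sqrt_le_sqrt (by exact_mod_cast hk1)
  have ha0 : (0:ℝ) < a := by linarith
  have hb0 : (0:ℝ) < b := by linarith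
  have ha2 : a^2 = t := Real.sq_sqrt (by positivity)
  have hb2 : b^2 = k := Real.sq_sqrt (by positivity)
  have h3 : 4*a^2 ≤ 3*b^2 := by
    rw [ha2, hb2]; exact_mod_cast h34
  have h2 : b ≤ 2*a := by
    have h4' : (k:ℝ) ≤ 4*t := by exact_mod_cast h4
    nlinarith [ha2, hb2]
  have key := poly_key a b ha hb h2 h3
  have htA : (t:ℝ) = a^2 := ha2.symm
  rw [htA]
  have hfrac : 100 * (1/a - 1/b) - b/a^2 = (100*a*b - 100*a^2 - b^2)/(a^2*b) := by
    field_simp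
  have hnum : 0 ≤ (100*a*b - 100*a^2 - b^2)/(a^2*b) := by
    apply div_nonneg (by linarith) (by positivity)
  linarith [hfrac ▸ hnum]

lemma odisc_combine (γ : ℝ) (hγ : 1 ≤ γ) (k t n0 n' : ℕ) (X R : ℝ)
    (ht : 1 ≤ t) (h34 : 4*t ≤ 3*k) (h4 : k ≤ 4*t)
    (hn' : n' ≤ n0)
    (hX : X ≤ γ * Real.sqrt k * Real.sqrt n0)
    (hR : R ≤ 100 * γ * (1 - 1/Real.sqrt t) * Real.sqrt n') :
    (1/(t:ℝ)) * X + R ≤ 100 * γ * (1 - 1/Real.sqrt k) * Real.sqrt n0 := by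
  have hγ0 : (0:ℝ) < γ := by linarith
  have ht0 : (0:ℝ) < t := by exact_mod_cast ht
  have hst : 1 ≤ Real.sqrt t := by
    rw [show (1:ℝ) = Real.sqrt 1 by simp]; exact Real.sqrt_le_sqrt (by exact_mod_cast ht)
  have hsn0 : 0 ≤ Real.sqrt n0 := Real.sqrt_nonneg _
  have hsn' : Real.sqrt n' ≤ Real.sqrt n0 := Real.sqrt_le_sqrt (by exact_mod_cast hn')
  have key := sqrt_key k t ht h34 h4
  have h1 : (1/(t:ℝ)) * X ≤ 100 * γ * (1/Real.sqrt t - 1/Real.sqrt k) * Real.sqrt n0 := by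
    calc (1/(t:ℝ)) * X ≤ (1/(t:ℝ)) * (γ * Real.sqrt k * Real.sqrt n0) :=
          mul_le_mul_of_nonneg_left hX (by positivity)
      _ = (Real.sqrt k / t) * (γ * Real.sqrt n0) := by ring
      _ ≤ (100 * (1/Real.sqrt t - 1/Real.sqrt k)) * (γ * Real.sqrt n0) :=
          mul_le_mul_of_nonneg_right key (by positivity)
      _ = 100 * γ * (1/Real.sqrt t - 1/Real.sqrt k) * Real.sqrt n0 := by ring
  have h2 : R ≤ 100 * γ * (1 - 1/Real.sqrt t) * Real.sqrt n0 := by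
    refine hR.trans ?_
    have h1t : 1/Real.sqrt t ≤ 1 := by
      rw [div_le_one (by linarith)]; exact hst
    exact mul_le_mul_of_nonneg_left hsn' (mul_nonneg (by positivity) (by linarith))
  calc (1/(t:ℝ)) * X + R
      ≤ 100 * γ * (1/Real.sqrt t - 1/Real.sqrt k) * Real.sqrt n0
        + 100 * γ * (1 - 1/Real.sqrt t) * Real.sqrt n0 := by linarith
    _ = 100 * γ * (1 - 1/Real.sqrt k) * Real.sqrt n0 := by ring

set_option maxHeartbeats 2000000 in
/-- Suppose `γ ≥ 1` is a constant such that for every `n, m ∈ ℕ`,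
`p ∈ [0,1]`, and matrix `A ∈ [0,1]^{n×m}`, there exists `x ∈ {0,1}^m` with
`‖A(p·𝟏 − x)‖_∞ ≤ γ·√n`.  Then, with `ζ = 100γ`, for all positive integers `k`, all
`n₁ ≥ ⋯ ≥ n_k ≥ 1` (antitone `ns : Fin k → ℕ`), every `m ∈ ℕ`, and all matrices
`A^s ∈ [0,1]^{n_s × m}` (`s ∈ [k]`), there exists a coloring `χ : [m] → [k]` such that
for every `s ∈ [k]`, `‖A^s((1/k)·𝟏 − 𝟏(χ⁻¹(s)))‖_∞ ≤ ζ·(1 − 1/√k)·√n₁`. -/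
theorem odisc_recursion (γ : ℝ) (hγ : 1 ≤ γ)
    (hLSV : ∀ (n m : ℕ) (p : ℝ), p ∈ Set.Icc (0 : ℝ) 1 →
      ∀ A : Matrix (Fin n) (Fin m) ℝ, (∀ i j, A i j ∈ Set.Icc (0 : ℝ) 1) →
        ∃ x : Fin m → ℝ, (∀ j, x j = 0 ∨ x j = 1) ∧
          ∀ i : Fin n, |A.mulVec (fun j => p - x j) i| ≤ γ * Real.sqrt n) :
    ∀ (k : ℕ) (hk : 0 < k) (ns : Fin k → ℕ),
      (∀ a b : Fin k, a ≤ b → ns b ≤ ns a) → (∀ i, 1 ≤ ns i) →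
      ∀ (m : ℕ) (A : ∀ s : Fin k, Matrix (Fin (ns s)) (Fin m) ℝ),
        (∀ s i j, A s i j ∈ Set.Icc (0 : ℝ) 1) →
        ∃ χ : Fin m → Fin k, ∀ (s : Fin k) (i : Fin (ns s)),
          |(A s).mulVec (fun j => 1 / (k : ℝ) - if χ j = s then 1 else 0) i|
            ≤ (100 * γ) * (1 - 1 / Real.sqrt k) * Real.sqrt (ns ⟨0, hk⟩) := by
  intro k
  induction k using Nat.strong_induction_on with
  | _ k IH =>
  intro hk ns hmono hns m A hA
  by_cases hk2 : k < 2
  · -- base case k = 1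
    have hk1 : k = 1 := by omega
    subst hk1
    refine ⟨fun _ => ⟨0, hk⟩, fun s i => ?_⟩
    have hs : s = ⟨0, hk⟩ := Subsingleton.elim _ _
    subst hs
    simp [Matrix.mulVec, dotProduct]
  · push_neg at hk2
    classical
    set l := (k+1)/2 with hldef
    have hl1 : 0 < l := by omega
    have hlk : l < k := by omega
    have hlle : l ≤ k := le_of_lt hlk
    set r := k - l with hrdef
    have hr1 : 0 < r := by omega
    have hrk : r < k := by omega
    set n0 := ns ⟨0, hk⟩ with hn0def
    -- big stacked matrix
    set N := Fintype.card ((s : Fin k) × Fin (ns s)) with hNdef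
    set e := Fintype.equivFin ((s : Fin k) × Fin (ns s)) with hedef
    have hNle : (N:ℝ) ≤ (k:ℝ) * n0 := by
      have h1 : N = ∑ s : Fin k, ns s := by simp [hNdef]
      have hsum : ∑ s : Fin k, ns s ≤ ∑ _s : Fin k, n0 :=
        Finset.sum_le_sum (fun s _ => hmono ⟨0, hk⟩ s (by simp [Fin.le_def]))
      have h2 : N ≤ k * n0 := by
        rw [h1]; simpa using hsum
      exact_mod_cast h2
    have hk0 : (0:ℝ) < k := by exact_mod_cast hk
    have hl0 : (0:ℝ) < l := by exact_mod_cast hl1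
    have hr0 : (0:ℝ) < r := by exact_mod_cast hr1
    have hp : (l:ℝ)/k ∈ Set.Icc (0:ℝ) 1 :=
      ⟨by positivity, by rw [div_le_one hk0]; exact_mod_cast hlle⟩
    obtain ⟨x, hx01, hxb⟩ := hLSV N m ((l:ℝ)/k) hp
      (fun i j => A (e.symm i).1 (e.symm i).2 j) (fun i j => hA _ _ _)
    have hrow : ∀ (s : Fin k) (i : Fin (ns s)),
        |∑ j, A s i j * ((l:ℝ)/k - x j)| ≤ γ * Real.sqrt N := by
      intro s i
      have h := hxb (e ⟨s, i⟩)
      simp only [Matrix.mulVec, dotProduct] at h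
      rw [e.symm_apply_apply ⟨s, i⟩] at h
      exact h
    -- recursive calls
    obtain ⟨χL, hχL⟩ := IH l hlk hl1 (fun s' => ns (Fin.castLE hlle s'))
      (fun a b hab => hmono _ _ hab)
      (fun i => hns _) (Fintype.card {j : Fin m // x j = 1})
      (fun s' i j' => A (Fin.castLE hlle s') i
        ((Fintype.equivFin {j : Fin m // x j = 1}).symm j').1)
      (fun s' i j' => hA _ _ _)
    obtain ⟨χR, hχR⟩ := IH r hrk hr1 (fun s' => ns ⟨l + s'.1, by omega⟩)
      (fun a b hab => hmono _ _ (by simp only [Fin.mk_le_mk]; exact Nat.add_le_add_left (Fin.le_def.mp hab) l))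
      (fun i => hns _) (Fintype.card {j : Fin m // ¬ x j = 1})
      (fun s' i j' => A ⟨l + s'.1, by omega⟩ i
        ((Fintype.equivFin {j : Fin m // ¬ x j = 1}).symm j').1)
      (fun s' i j' => hA _ _ _)
    set eL := (Fintype.equivFin {j : Fin m // x j = 1}).symm with heLdef
    set eR := (Fintype.equivFin {j : Fin m // ¬ x j = 1}).symm with heRdef
    set χ : Fin m → Fin k := fun j => if h : x j = 1 then Fin.castLE hlle (χL (eL.symm ⟨j, h⟩))
      else ⟨l + (χR (eR.symm ⟨j, h⟩)).1, by have := (χR (eR.symm ⟨j, h⟩)).isLt; omega⟩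
      with hχdef
    have hχ1 : ∀ (j : Fin m) (h : x j = 1), χ j = Fin.castLE hlle (χL (eL.symm ⟨j, h⟩)) := by
      intro j h; rw [hχdef]; exact dif_pos h
    have hχ0 : ∀ (j : Fin m) (h : ¬ x j = 1),
        χ j = ⟨l + (χR (eR.symm ⟨j, h⟩)).1, by have := (χR (eR.symm ⟨j, h⟩)).isLt; omega⟩ := by
      intro j h; rw [hχdef]; exact dif_neg h
    have hsqrtN : Real.sqrt N ≤ Real.sqrt k * Real.sqrt n0 := by
      rw [← Real.sqrt_mul (by positivity)]
      exact Real.sqrt_le_sqrt hNle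
    refine ⟨χ, fun s i => ?_⟩
    simp only [Matrix.mulVec, dotProduct]
    have hX : |∑ j, A s i j * ((l:ℝ)/k - x j)| ≤ γ * Real.sqrt k * Real.sqrt n0 := by
      calc |∑ j, A s i j * ((l:ℝ)/k - x j)| ≤ γ * Real.sqrt N := hrow s i
        _ ≤ γ * (Real.sqrt k * Real.sqrt n0) :=
            mul_le_mul_of_nonneg_left hsqrtN (by linarith)
        _ = γ * Real.sqrt k * Real.sqrt n0 := by ring
    rcases Nat.lt_or_ge s.1 l with hs | hs
    · -- s belongs to the first block
      set s' : Fin l := ⟨s.1, hs⟩ with hs'def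
      have hlk1 : (1/(l:ℝ)) * ((l:ℝ)/k) = 1/(k:ℝ) := by field_simp
      have step1 : ∑ j, A s i j * (1/(k:ℝ) - if χ j = s then 1 else 0)
          = (1/(l:ℝ)) * (∑ j, A s i j * ((l:ℝ)/k - x j))
            + ∑ j, A s i j * ((1/(l:ℝ)) * x j - if χ j = s then 1 else 0) := by
        rw [Finset.mul_sum, ← Finset.sum_add_distrib]
        refine Finset.sum_congr rfl (fun j _ => ?_)
        rw [← hlk1]; ring
      have hg0 : ∀ j, ¬ x j = 1 →
          A s i j * ((1/(l:ℝ)) * x j - if χ j = s then 1 else 0) = 0 := by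
        intro j h
        have hx0 : x j = 0 := (hx01 j).resolve_right h
        have hne : χ j ≠ s := by
          rw [hχ0 j h]
          intro hc
          have hval := congrArg Fin.val hc
          simp only at hval
          omega
        rw [hx0, if_neg hne]; ring
      have e4 : ∀ j' : Fin (Fintype.card {j : Fin m // x j = 1}),
          A s i (eL j').1 * ((1/(l:ℝ)) * x (eL j').1 - if χ (eL j').1 = s then 1 else 0)
          = A s i (eL j').1 * (1/(l:ℝ) - if χL j' = s' then 1 else 0) := by
        intro j'
        have hx1 : x (eL j').1 = 1 := (eL j').2
        have hsymm : eL.symm ⟨(eL j').1, hx1⟩ = j' := by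
          have h1 : (⟨(eL j').1, hx1⟩ : {j : Fin m // x j = 1}) = eL j' := rfl
          rw [h1, Equiv.symm_apply_apply]
        have hχj : χ (eL j').1 = Fin.castLE hlle (χL j') := by
          rw [hχ1 _ hx1, hsymm]
        have hcond : (Fin.castLE hlle (χL j') = s) = (χL j' = s') := by
          apply propext
          rw [Fin.ext_iff, Fin.ext_iff]
          simp [Fin.coe_castLE, hs'def]
        rw [hx1, hχj, mul_one]
        simp only [hcond]
      have step2 : ∑ j, A s i j * ((1/(l:ℝ)) * x j - if χ j = s then 1 else 0)
          = ∑ j' : Fin (Fintype.card {j : Fin m // x j = 1}),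
              A s i (eL j').1 * (1/(l:ℝ) - if χL j' = s' then 1 else 0) := by
        rw [← Finset.sum_filter_of_ne (p := fun j => x j = 1)
          (fun j _ hne => by by_contra hc; exact hne (hg0 j hc))]
        rw [Finset.sum_subtype (p := fun j => x j = 1) _ (by intro j; simp)
          (fun j => A s i j * ((1/(l:ℝ)) * x j - if χ j = s then 1 else 0))]
        rw [← Equiv.sum_comp eL
          (fun t : {j : Fin m // x j = 1} =>
            A s i t.1 * ((1/(l:ℝ)) * x t.1 - if χ t.1 = s then 1 else 0))]
        exact Finset.sum_congr rfl (fun j' _ => e4 j')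
      have hW : |∑ j' : Fin (Fintype.card {j : Fin m // x j = 1}),
            A s i (eL j').1 * (1/(l:ℝ) - if χL j' = s' then 1 else 0)|
          ≤ 100 * γ * (1 - 1/Real.sqrt l) * Real.sqrt (ns (Fin.castLE hlle ⟨0, hl1⟩)) := by
        have h := hχL s' i
        simp only [Matrix.mulVec, dotProduct] at h
        calc _ ≤ (100*γ) * (1 - 1/Real.sqrt l) * Real.sqrt (ns (Fin.castLE hlle ⟨0, hl1⟩)) :=
              h
          _ = 100 * γ * (1 - 1/Real.sqrt l) * Real.sqrt (ns (Fin.castLE hlle ⟨0, hl1⟩)) := by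
              ring
      rw [step1, step2]
      calc |(1/(l:ℝ)) * (∑ j, A s i j * ((l:ℝ)/k - x j))
            + ∑ j' : Fin (Fintype.card {j : Fin m // x j = 1}),
              A s i (eL j').1 * (1/(l:ℝ) - if χL j' = s' then 1 else 0)|
          ≤ |(1/(l:ℝ)) * (∑ j, A s i j * ((l:ℝ)/k - x j))|
            + |∑ j' : Fin (Fintype.card {j : Fin m // x j = 1}),
              A s i (eL j').1 * (1/(l:ℝ) - if χL j' = s' then 1 else 0)| := abs_add_le _ _
        _ = (1/(l:ℝ)) * |∑ j, A s i j * ((l:ℝ)/k - x j)|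
            + |∑ j' : Fin (Fintype.card {j : Fin m // x j = 1}),
              A s i (eL j').1 * (1/(l:ℝ) - if χL j' = s' then 1 else 0)| := by
            rw [abs_mul, abs_of_nonneg (le_of_lt (by positivity : (0:ℝ) < 1/(l:ℝ)))]
        _ ≤ (100 * γ) * (1 - 1/Real.sqrt k) * Real.sqrt n0 := by
            have := odisc_combine γ hγ k l n0 (ns (Fin.castLE hlle ⟨0, hl1⟩))
              (|∑ j, A s i j * ((l:ℝ)/k - x j)|)
              (|∑ j' : Fin (Fintype.card {j : Fin m // x j = 1}),
                A s i (eL j').1 * (1/(l:ℝ) - if χL j' = s' then 1 else 0)|)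
              hl1 (by omega) (by omega) le_rfl hX hW
            calc _ ≤ 100 * γ * (1 - 1/Real.sqrt k) * Real.sqrt n0 := this
              _ = (100 * γ) * (1 - 1/Real.sqrt k) * Real.sqrt n0 := by ring
    · -- s belongs to the second block
      have hAcast : ∀ (s₁ s₂ : Fin k) (h : s₁ = s₂) (i₁ : Fin (ns s₁)) (jj : Fin m),
          A s₂ (Fin.cast (congrArg ns h) i₁) jj = A s₁ i₁ jj := by
        rintro s₁ s₂ rfl i₁ jj; rfl
      set s' : Fin r := ⟨s.1 - l, by omega⟩ with hs'def
      have hidx : s = (⟨l + s'.1, by omega⟩ : Fin k) := by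
        apply Fin.ext
        show s.1 = l + (s.1 - l)
        omega
      have hcast : (r:ℝ) = (k:ℝ) - (l:ℝ) := by
        rw [hrdef, Nat.cast_sub hlle]
      have hrk1 : -(1/(r:ℝ)) * ((l:ℝ)/k) + (1/(r:ℝ)) = 1/(k:ℝ) := by
        have hkl0 : (k:ℝ) - (l:ℝ) ≠ 0 := by rw [← hcast]; exact ne_of_gt hr0
        rw [hcast]
        field_simp
        ring
      have step1 : ∑ j, A s i j * (1/(k:ℝ) - if χ j = s then 1 else 0)
          = (-(1/(r:ℝ))) * (∑ j, A s i j * ((l:ℝ)/k - x j))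
            + ∑ j, A s i j * ((1/(r:ℝ)) * (1 - x j) - if χ j = s then 1 else 0) := by
        rw [Finset.mul_sum, ← Finset.sum_add_distrib]
        refine Finset.sum_congr rfl (fun j _ => ?_)
        rw [← hrk1]; ring
      have hg0 : ∀ j, x j = 1 →
          A s i j * ((1/(r:ℝ)) * (1 - x j) - if χ j = s then 1 else 0) = 0 := by
        intro j h
        have hne : χ j ≠ s := by
          rw [hχ1 j h]
          intro hc
          have hval := congrArg Fin.val hc
          simp only [Fin.coe_castLE] at hval
          have := (χL (eL.symm ⟨j, h⟩)).isLt
          omega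
        rw [h, if_neg hne]; ring
      have e4 : ∀ j' : Fin (Fintype.card {j : Fin m // ¬ x j = 1}),
          A s i (eR j').1 * ((1/(r:ℝ)) * (1 - x (eR j').1) - if χ (eR j').1 = s then 1 else 0)
          = A s i (eR j').1 * (1/(r:ℝ) - if χR j' = s' then 1 else 0) := by
        intro j'
        have h0 : ¬ x (eR j').1 = 1 := (eR j').2
        have hx0 : x (eR j').1 = 0 := (hx01 _).resolve_right h0
        have hsymm : eR.symm ⟨(eR j').1, h0⟩ = j' := by
          have h1 : (⟨(eR j').1, h0⟩ : {j : Fin m // ¬ x j = 1}) = eR j' := rfl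
          rw [h1, Equiv.symm_apply_apply]
        have hχj : χ (eR j').1
            = (⟨l + (χR j').1, by have := (χR j').isLt; omega⟩ : Fin k) := by
          refine (hχ0 _ h0).trans ?_
          apply Fin.ext
          simp only [hsymm]
        have hcond : ((⟨l + (χR j').1, by have := (χR j').isLt; omega⟩ : Fin k) = s)
            = (χR j' = s') := by
          apply propext
          constructor
          · intro h
            have hval := congrArg Fin.val h
            apply Fin.ext
            show (χR j').1 = s.1 - l
            have h2 : l + (χR j').1 = s.1 := hval
            omega
          · intro h
            have hval := congrArg Fin.val h
            apply Fin.ext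
            show l + (χR j').1 = s.1
            have h2 : (χR j').1 = s.1 - l := hval
            omega
        simp only [hx0, hχj, hcond, sub_zero, mul_one]
      have step2 : ∑ j, A s i j * ((1/(r:ℝ)) * (1 - x j) - if χ j = s then 1 else 0)
          = ∑ j' : Fin (Fintype.card {j : Fin m // ¬ x j = 1}),
              A s i (eR j').1 * (1/(r:ℝ) - if χR j' = s' then 1 else 0) := by
        rw [← Finset.sum_filter_of_ne (p := fun j => ¬ x j = 1)
          (fun j _ hne h1 => hne (hg0 j h1))]
        rw [Finset.sum_subtype (p := fun j => ¬ x j = 1) _ (by intro j; simp)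
          (fun j => A s i j * ((1/(r:ℝ)) * (1 - x j) - if χ j = s then 1 else 0))]
        rw [← Equiv.sum_comp eR
          (fun t : {j : Fin m // ¬ x j = 1} =>
            A s i t.1 * ((1/(r:ℝ)) * (1 - x t.1) - if χ t.1 = s then 1 else 0))]
        exact Finset.sum_congr rfl (fun j' _ => e4 j')
      have hW : |∑ j' : Fin (Fintype.card {j : Fin m // ¬ x j = 1}),
            A s i (eR j').1 * (1/(r:ℝ) - if χR j' = s' then 1 else 0)|
          ≤ 100 * γ * (1 - 1/Real.sqrt r)
              * Real.sqrt (ns ⟨l + ((⟨0, hr1⟩ : Fin r) : ℕ), by omega⟩) := by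
        have h := hχR s' (Fin.cast (congrArg ns hidx) i)
        simp only [Matrix.mulVec, dotProduct] at h
        have hsum : ∑ j' : Fin (Fintype.card {j : Fin m // ¬ x j = 1}),
            A (⟨l + s'.1, by omega⟩ : Fin k) (Fin.cast (congrArg ns hidx) i) (eR j').1
              * (1/(r:ℝ) - if χR j' = s' then 1 else 0)
            = ∑ j' : Fin (Fintype.card {j : Fin m // ¬ x j = 1}),
              A s i (eR j').1 * (1/(r:ℝ) - if χR j' = s' then 1 else 0) :=
          Finset.sum_congr rfl (fun j' _ => by rw [hAcast s _ hidx i])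
        rw [hsum] at h
        calc _ ≤ (100*γ) * (1 - 1/Real.sqrt r)
              * Real.sqrt (ns ⟨l + ((⟨0, hr1⟩ : Fin r) : ℕ), by omega⟩) := h
          _ = 100 * γ * (1 - 1/Real.sqrt r)
              * Real.sqrt (ns ⟨l + ((⟨0, hr1⟩ : Fin r) : ℕ), by omega⟩) := by ring
      have hn'le : ns ⟨l + ((⟨0, hr1⟩ : Fin r) : ℕ), by omega⟩ ≤ n0 :=
        hmono ⟨0, hk⟩ _ (by simp [Fin.le_def])
      rw [step1, step2]
      calc |(-(1/(r:ℝ))) * (∑ j, A s i j * ((l:ℝ)/k - x j))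
            + ∑ j' : Fin (Fintype.card {j : Fin m // ¬ x j = 1}),
              A s i (eR j').1 * (1/(r:ℝ) - if χR j' = s' then 1 else 0)|
          ≤ |(-(1/(r:ℝ))) * (∑ j, A s i j * ((l:ℝ)/k - x j))|
            + |∑ j' : Fin (Fintype.card {j : Fin m // ¬ x j = 1}),
              A s i (eR j').1 * (1/(r:ℝ) - if χR j' = s' then 1 else 0)| := abs_add_le _ _
        _ = (1/(r:ℝ)) * |∑ j, A s i j * ((l:ℝ)/k - x j)|
            + |∑ j' : Fin (Fintype.card {j : Fin m // ¬ x j = 1}),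
              A s i (eR j').1 * (1/(r:ℝ) - if χR j' = s' then 1 else 0)| := by
            rw [abs_mul, abs_neg, abs_of_nonneg (le_of_lt (by positivity : (0:ℝ) < 1/(r:ℝ)))]
        _ ≤ (100 * γ) * (1 - 1/Real.sqrt k) * Real.sqrt n0 := by
            have := odisc_combine γ hγ k r n0 (ns ⟨l + ((⟨0, hr1⟩ : Fin r) : ℕ), by omega⟩)
              (|∑ j, A s i j * ((l:ℝ)/k - x j)|)
              (|∑ j' : Fin (Fintype.card {j : Fin m // ¬ x j = 1}),
                A s i (eR j').1 * (1/(r:ℝ) - if χR j' = s' then 1 else 0)|)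
              hr1 (by omega) (by omega) hn'le hX hW
            calc _ ≤ 100 * γ * (1 - 1/Real.sqrt k) * Real.sqrt n0 := this
              _ = (100 * γ) * (1 - 1/Real.sqrt k) * Real.sqrt n0 := by ring
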